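/- For the Barndorff-Nielsen density f, the moment generating function G(u₁,u₂) is infinite whenever |u₂| > 1, and also whenever |u₂| = 1 and u₁ ≠ 0 with sign condition: specifically if u₂² = 1 and u₁ ≠ 0 then ∫_ℝ (1+ξ₁²)^{-1} exp(u₁ξ₁) dξ₁ = ∞. Hence the domain of G is exactly (ℝ × (−1,1)) ∪ {(0,1),(0,−1)}. -/

import Mathlib

open MeasureTheory Real Set
open scoped ENNReal

noncomputable def BNdensity (ξ : ℝ × ℝ) : ℝ :=
  (1 / (2 * Real.sqrt π)) * (1 + ξ.1 ^ 2) ^ (-(3 : ℝ) / 2) *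
    Real.exp (-ξ.1 ^ 2 - ξ.2 ^ 2 / (4 * (1 + ξ.1 ^ 2)))

lemma BN_lint_neg (f : ℝ → ℝ≥0∞) : ∫⁻ x : ℝ, f (-x) = ∫⁻ x : ℝ, f x :=
  (Measure.measurePreserving_neg volume).lintegral_comp_emb
    (MeasurableEquiv.neg ℝ).measurableEmbedding f

lemma BN_lint_top_of_ray (f : ℝ → ℝ) (M : ℝ) (h : ∀ x ∈ Ici M, 1 ≤ f x) :
    ∫⁻ x : ℝ, ENNReal.ofReal (f x) = ⊤ := by
  rw [eq_top_iff, ← Real.volume_Ici (a := M)]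
  calc volume (Ici M) = ∫⁻ _ in Ici M, (1 : ℝ≥0∞) := by simp
    _ ≤ ∫⁻ x in Ici M, ENNReal.ofReal (f x) :=
        setLIntegral_mono' measurableSet_Ici fun x hx =>
          ENNReal.one_le_ofReal.mpr (h x hx)
    _ ≤ ∫⁻ x, ENNReal.ofReal (f x) := setLIntegral_le_lintegral _ _

-- exp(u*x) ≥ 1 + x² for x ≥ 16/u², u > 0
lemma BN_exp_dom (u x : ℝ) (hu : 0 < u) (hx : 16 / u ^ 2 ≤ x) :
    1 + x ^ 2 ≤ Real.exp (u * x) := by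
  have hx0 : 0 ≤ x := le_trans (by positivity) hx
  have h1 : 16 ≤ u ^ 2 * x := by
    rw [div_le_iff₀ (by positivity)] at hx
    nlinarith
  have h2 : (1 + u * x / 4) ^ 4 ≤ Real.exp (u * x) := by
    have h3 : 1 + u * x / 4 ≤ Real.exp (u * x / 4) := by
      have := Real.add_one_le_exp (u * x / 4); linarith
    have h4 : (0:ℝ) ≤ 1 + u * x / 4 := by positivity
    calc (1 + u * x / 4) ^ 4 ≤ Real.exp (u * x / 4) ^ 4 :=
        pow_le_pow_left₀ h4 h3 4
      _ = Real.exp (u * x) := by rw [← Real.exp_nat_mul]; ring_nf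
  have h5 : x ≤ (u * x / 4) ^ 2 := by nlinarith
  nlinarith [sq_nonneg (u*x/4), sq_nonneg x, sq_nonneg (u*x/4 - x), sq_nonneg (u*x/4),
    pow_le_pow_left₀ (by positivity : (0:ℝ) ≤ 1) (le_refl (1:ℝ)) 4, sq_nonneg (1 + u*x/4),
    mul_nonneg (mul_nonneg hu.le hx0) hx0]

lemma BN_part1_pos (u : ℝ) (hu : 0 < u) :
    ∫⁻ x : ℝ, ENNReal.ofReal ((1 + x ^ 2)⁻¹ * Real.exp (u * x)) = ⊤ := by
  apply BN_lint_top_of_ray _ (16 / u ^ 2)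
  intro x hx
  have h := BN_exp_dom u x hu hx
  have hs : (0:ℝ) < 1 + x ^ 2 := by positivity
  rw [inv_mul_eq_div, le_div_iff₀ hs]; linarith

lemma BN_part1 (u : ℝ) (hu : u ≠ 0) :
    ∫⁻ x : ℝ, ENNReal.ofReal ((1 + x ^ 2)⁻¹ * Real.exp (u * x)) = ⊤ := by
  rcases hu.lt_or_gt with h | h
  · rw [← BN_lint_neg (fun x => ENNReal.ofReal ((1 + x ^ 2)⁻¹ * Real.exp (u * x)))]
    have : ∀ x : ℝ, ENNReal.ofReal ((1 + (-x) ^ 2)⁻¹ * Real.exp (u * -x))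
        = ENNReal.ofReal ((1 + x ^ 2)⁻¹ * Real.exp ((-u) * x)) := by
      intro x; ring_nf
    simp_rw [this]
    exact BN_part1_pos (-u) (by linarith)
  · exact BN_part1_pos u h

lemma BN_inner_eq (u₁ u₂ x : ℝ) :
    ∫⁻ y : ℝ, ENNReal.ofReal (Real.exp (u₁ * x + u₂ * y) * BNdensity (x, y))
      = ENNReal.ofReal (Real.exp (u₂ ^ 2) * (1 + x ^ 2)⁻¹ *
          Real.exp (u₁ * x - (1 - u₂ ^ 2) * x ^ 2)) := by
  have hs : (0:ℝ) < 1 + x ^ 2 := by positivity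
  set s : ℝ := 1 + x ^ 2 with hs_def
  set b : ℝ := 1 / (4 * s) with hb_def
  have hb : 0 < b := by positivity
  set C : ℝ := (1 / (2 * Real.sqrt π)) * s ^ (-(3:ℝ)/2) *
      Real.exp (u₂ ^ 2 * s + u₁ * x - x ^ 2) with hC_def
  have hπ : (0:ℝ) < Real.sqrt π := Real.sqrt_pos.mpr Real.pi_pos
  have hC : 0 ≤ C := by
    have : (0:ℝ) < s ^ (-(3:ℝ)/2) := Real.rpow_pos_of_pos hs _
    positivity
  have hfe : ∀ y : ℝ, Real.exp (u₁ * x + u₂ * y) * BNdensity (x, y)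
      = C * Real.exp (-b * (y - 2 * u₂ * s) ^ 2) := by
    intro y
    have hexp : u₁ * x + u₂ * y + (-x ^ 2 - y ^ 2 / (4 * s))
        = (u₂ ^ 2 * s + u₁ * x - x ^ 2) + (-b * (y - 2 * u₂ * s) ^ 2) := by
      rw [hb_def]; field_simp; ring
    calc Real.exp (u₁ * x + u₂ * y) * BNdensity (x, y)
        = (1 / (2 * Real.sqrt π)) * s ^ (-(3:ℝ)/2) *
            Real.exp (u₁ * x + u₂ * y + (-x ^ 2 - y ^ 2 / (4 * s))) := by
          simp only [BNdensity, Real.exp_add]; ring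
      _ = C * Real.exp (-b * (y - 2 * u₂ * s) ^ 2) := by
          rw [hexp, Real.exp_add, hC_def]; ring
  simp_rw [hfe]
  have hint : Integrable (fun y : ℝ => C * Real.exp (-b * (y - 2 * u₂ * s) ^ 2)) :=
    ((integrable_exp_neg_mul_sq hb).comp_sub_right (2 * u₂ * s)).const_mul C
  rw [← ofReal_integral_eq_lintegral_ofReal hint (ae_of_all _ fun y => by positivity)]
  have hval : ∫ y : ℝ, C * Real.exp (-b * (y - 2 * u₂ * s) ^ 2)
      = C * Real.sqrt (π / b) := by
    rw [MeasureTheory.integral_const_mul,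
      integral_sub_right_eq_self (fun y => Real.exp (-b * y ^ 2)) (2 * u₂ * s),
      integral_gaussian]
  rw [hval]
  congr 1
  have h1 : Real.sqrt (π / b) = 2 * Real.sqrt π * Real.sqrt s := by
    rw [hb_def]
    rw [show π / (1 / (4 * s)) = (2 * Real.sqrt s) ^ 2 * π by
      rw [mul_pow, Real.sq_sqrt hs.le]; field_simp; ring]
    rw [Real.sqrt_mul (by positivity), Real.sqrt_sq (by positivity)]
    ring
  rw [hC_def, h1]
  have h2 : s ^ (-(3:ℝ)/2) * Real.sqrt s = s⁻¹ := by
    rw [Real.sqrt_eq_rpow, ← Real.rpow_add hs, ← Real.rpow_neg_one s]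
    norm_num
  have h3 : Real.exp (u₂ ^ 2 * s + u₁ * x - x ^ 2)
      = Real.exp (u₂ ^ 2) * Real.exp (u₁ * x - (1 - u₂ ^ 2) * x ^ 2) := by
    rw [← Real.exp_add]; congr 1; rw [hs_def]; ring
  calc (1 / (2 * Real.sqrt π)) * s ^ (-(3:ℝ)/2) * Real.exp (u₂ ^ 2 * s + u₁ * x - x ^ 2) *
        (2 * Real.sqrt π * Real.sqrt s)
      = (s ^ (-(3:ℝ)/2) * Real.sqrt s) * Real.exp (u₂ ^ 2 * s + u₁ * x - x ^ 2) *
        ((1 / (2 * Real.sqrt π)) * (2 * Real.sqrt π)) := by ring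
    _ = Real.exp (u₂ ^ 2) * s⁻¹ * Real.exp (u₁ * x - (1 - u₂ ^ 2) * x ^ 2) := by
        rw [h2, h3, div_mul_cancel₀]
        · ring
        · positivity

lemma BN_key (u₁ u₂ : ℝ) :
    ∫⁻ ξ : ℝ × ℝ, ENNReal.ofReal (Real.exp (u₁ * ξ.1 + u₂ * ξ.2) * BNdensity ξ)
      = ∫⁻ x : ℝ, ENNReal.ofReal (Real.exp (u₂ ^ 2) * (1 + x ^ 2)⁻¹ *
          Real.exp (u₁ * x - (1 - u₂ ^ 2) * x ^ 2)) := by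
  have hcont : Continuous BNdensity := by
    unfold BNdensity
    apply Continuous.mul
    · apply Continuous.mul continuous_const
      exact Continuous.rpow_const (by fun_prop) fun ξ => Or.inl (by positivity)
    · apply Real.continuous_exp.comp
      apply Continuous.sub (by fun_prop)
      apply Continuous.div (by fun_prop) (by fun_prop)
      intro ξ; positivity
  have hmeas : Measurable fun ξ : ℝ × ℝ =>
      ENNReal.ofReal (Real.exp (u₁ * ξ.1 + u₂ * ξ.2) * BNdensity ξ) := by
    apply ENNReal.measurable_ofReal.comp
    exact ((Real.continuous_exp.comp (by fun_prop)).mul hcont).measurable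
  rw [MeasureTheory.Measure.volume_eq_prod, lintegral_prod _ hmeas.aemeasurable]
  exact lintegral_congr fun x => BN_inner_eq u₁ u₂ x

lemma BN_div_gt (u₁ u₂ : ℝ) (h : 1 < u₂ ^ 2) :
    ∫⁻ x : ℝ, ENNReal.ofReal (Real.exp (u₂ ^ 2) * (1 + x ^ 2)⁻¹ *
        Real.exp (u₁ * x - (1 - u₂ ^ 2) * x ^ 2)) = ⊤ := by
  obtain ⟨c, hc_def⟩ : ∃ c : ℝ, c = u₂ ^ 2 - 1 := ⟨_, rfl⟩
  have hc : 0 < c := by rw [hc_def]; linarith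
  have hrw : ∀ x : ℝ, u₁ * x - (1 - u₂ ^ 2) * x ^ 2 = u₁ * x + c * x ^ 2 := by
    intro x; rw [hc_def]; ring
  apply BN_lint_top_of_ray _ (max (2 * |u₁| / c) (4 / c))
  intro x hx
  have hx1 : 2 * |u₁| / c ≤ x := le_trans (le_max_left _ _) hx
  have hx2 : 4 / c ≤ x := le_trans (le_max_right _ _) hx
  have hx0 : 0 ≤ x := le_trans (by positivity) hx2
  have hs : (0:ℝ) < 1 + x ^ 2 := by positivity
  have h1 : c * x ^ 2 / 2 ≤ u₁ * x + c * x ^ 2 := by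
    rw [div_le_iff₀ hc] at hx1
    nlinarith [neg_abs_le u₁, abs_nonneg u₁, mul_le_mul_of_nonneg_right hx1 hx0]
  have h2 : 1 + x ^ 2 ≤ Real.exp (c * x ^ 2 / 2) := by
    have h3 : (1 + c * x ^ 2 / 4) ^ 2 ≤ Real.exp (c * x ^ 2 / 4) ^ 2 :=
      pow_le_pow_left₀ (by positivity)
        (by have := Real.add_one_le_exp (c * x ^ 2 / 4); linarith) 2
    have h4 : Real.exp (c * x ^ 2 / 4) ^ 2 = Real.exp (c * x ^ 2 / 2) := by
      rw [← Real.exp_nat_mul]; ring_nf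
    rw [div_le_iff₀ hc] at hx2
    have h5 : 16 ≤ (x * c) ^ 2 := by nlinarith [sq_nonneg (x * c - 4)]
    have h6 : x ^ 2 * 16 ≤ x ^ 2 * (x * c) ^ 2 :=
      mul_le_mul_of_nonneg_left h5 (sq_nonneg x)
    nlinarith [h6, mul_nonneg hc.le (sq_nonneg x)]
  have hE : 1 + x ^ 2 ≤ Real.exp (u₁ * x - (1 - u₂ ^ 2) * x ^ 2) := by
    rw [hrw x]
    exact le_trans h2 (Real.exp_le_exp.mpr h1)
  have hexp1 : (1:ℝ) ≤ Real.exp (u₂ ^ 2) := Real.one_le_exp (by positivity)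
  have ha : (0:ℝ) ≤ (1 + x ^ 2)⁻¹ := by positivity
  calc (1:ℝ) = (1 + x ^ 2)⁻¹ * (1 + x ^ 2) := (inv_mul_cancel₀ hs.ne').symm
    _ ≤ (1 + x ^ 2)⁻¹ * Real.exp (u₁ * x - (1 - u₂ ^ 2) * x ^ 2) :=
        mul_le_mul_of_nonneg_left hE ha
    _ ≤ Real.exp (u₂ ^ 2) * ((1 + x ^ 2)⁻¹ * Real.exp (u₁ * x - (1 - u₂ ^ 2) * x ^ 2)) :=
        le_mul_of_one_le_left (by positivity) hexp1
    _ = Real.exp (u₂ ^ 2) * (1 + x ^ 2)⁻¹ * Real.exp (u₁ * x - (1 - u₂ ^ 2) * x ^ 2) := by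
        ring

lemma BN_fin_lt (u₁ u₂ : ℝ) (h : u₂ ^ 2 < 1) :
    ∫⁻ x : ℝ, ENNReal.ofReal (Real.exp (u₂ ^ 2) * (1 + x ^ 2)⁻¹ *
        Real.exp (u₁ * x - (1 - u₂ ^ 2) * x ^ 2)) < ⊤ := by
  obtain ⟨c, hc_def⟩ : ∃ c : ℝ, c = 1 - u₂ ^ 2 := ⟨_, rfl⟩
  rw [show (1 - u₂ ^ 2) = c from hc_def.symm]
  have hc : 0 < c := by rw [hc_def]; nlinarith
  apply Integrable.lintegral_lt_top
  have base : Integrable (fun x : ℝ => Real.exp (-c * (x - u₁ / (2 * c)) ^ 2)) :=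
    (integrable_exp_neg_mul_sq hc).comp_sub_right _
  apply (base.const_mul (Real.exp (u₂ ^ 2) * Real.exp (u₁ ^ 2 / (4 * c)))).mono'
  · have hcont : Continuous fun x : ℝ =>
        Real.exp (u₂ ^ 2) * (1 + x ^ 2)⁻¹ * Real.exp (u₁ * x - c * x ^ 2) := by
      apply Continuous.mul
      · exact continuous_const.mul
          ((continuous_const.add (continuous_pow 2)).inv₀ fun x => (by positivity : (0:ℝ) < 1 + x ^ 2).ne')
      · fun_prop
    exact hcont.aestronglyMeasurable
  · filter_upwards with x
    rw [Real.norm_eq_abs, abs_of_nonneg (by positivity)]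
    have hkey : Real.exp (u₂ ^ 2) * Real.exp (u₁ ^ 2 / (4 * c)) *
        Real.exp (-c * (x - u₁ / (2 * c)) ^ 2)
        = Real.exp (u₂ ^ 2) * Real.exp (u₁ * x - c * x ^ 2) := by
      have hsq : -c * (x - u₁ / (2 * c)) ^ 2 = u₁ * x - c * x ^ 2 - u₁ ^ 2 / (4 * c) := by
        field_simp
        ring
      have harith : u₁ ^ 2 / (4 * c) + (u₁ * x - c * x ^ 2 - u₁ ^ 2 / (4 * c))
          = u₁ * x - c * x ^ 2 := by ring
      rw [hsq, mul_assoc, ← Real.exp_add, harith]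
    rw [hkey]
    have hinv : (1 + x ^ 2)⁻¹ ≤ 1 := by
      rw [inv_le_one_iff₀]; right; nlinarith
    calc Real.exp (u₂ ^ 2) * (1 + x ^ 2)⁻¹ * Real.exp (u₁ * x - c * x ^ 2)
        ≤ Real.exp (u₂ ^ 2) * 1 * Real.exp (u₁ * x - c * x ^ 2) := by gcongr
      _ = Real.exp (u₂ ^ 2) * Real.exp (u₁ * x - c * x ^ 2) := by ring

lemma BN_fin_one (u₂ : ℝ) (h : u₂ ^ 2 = 1) :
    ∫⁻ x : ℝ, ENNReal.ofReal (Real.exp (u₂ ^ 2) * (1 + x ^ 2)⁻¹ *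
        Real.exp (0 * x - (1 - u₂ ^ 2) * x ^ 2)) < ⊤ := by
  simp only [h, zero_mul, sub_self, zero_sub, neg_zero, Real.exp_zero, mul_one]
  exact Integrable.lintegral_lt_top (integrable_inv_one_add_sq.const_mul (Real.exp 1))

lemma BN_div_one (u₁ u₂ : ℝ) (h : u₂ ^ 2 = 1) (hu : u₁ ≠ 0) :
    ∫⁻ x : ℝ, ENNReal.ofReal (Real.exp (u₂ ^ 2) * (1 + x ^ 2)⁻¹ *
        Real.exp (u₁ * x - (1 - u₂ ^ 2) * x ^ 2)) = ⊤ := by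
  simp only [h, sub_self, zero_mul, sub_zero]
  have : ∀ x : ℝ, ENNReal.ofReal (Real.exp 1 * (1 + x ^ 2)⁻¹ * Real.exp (u₁ * x))
      = ENNReal.ofReal (Real.exp 1) *
        ENNReal.ofReal ((1 + x ^ 2)⁻¹ * Real.exp (u₁ * x)) := by
    intro x
    rw [mul_assoc, ENNReal.ofReal_mul (Real.exp_nonneg 1)]
  simp_rw [this]
  rw [lintegral_const_mul' _ _ ENNReal.ofReal_ne_top, BN_part1 u₁ hu,
    ENNReal.mul_top (by simp [Real.exp_pos])]

theorem BN_mgf_domain :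
    (∀ u₁ : ℝ, u₁ ≠ 0 →
      ∫⁻ x : ℝ, ENNReal.ofReal ((1 + x ^ 2)⁻¹ * Real.exp (u₁ * x)) = ⊤) ∧
    {u : ℝ × ℝ |
        ∫⁻ ξ : ℝ × ℝ, ENNReal.ofReal (Real.exp (u.1 * ξ.1 + u.2 * ξ.2) * BNdensity ξ) < ⊤}
      = (univ ×ˢ Ioo (-1 : ℝ) 1) ∪ {((0 : ℝ), (1 : ℝ)), ((0 : ℝ), (-1 : ℝ))} := by
  refine ⟨BN_part1, ?_⟩
  ext ⟨u₁, u₂⟩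
  simp only [mem_setOf_eq, mem_union, mem_prod, mem_univ, true_and, mem_Ioo,
    mem_insert_iff, mem_singleton_iff, Prod.mk.injEq]
  rw [BN_key u₁ u₂]
  constructor
  · intro hfin
    by_cases h1 : u₂ ^ 2 < 1
    · exact Or.inl ⟨by nlinarith [sq_nonneg (u₂ + 1)], by nlinarith [sq_nonneg (u₂ - 1)]⟩
    · right
      have h2 : u₂ ^ 2 = 1 := by
        by_contra h2
        exact hfin.ne (BN_div_gt u₁ u₂ (lt_of_le_of_ne (not_lt.mp h1) (Ne.symm h2)))
      have h3 : u₁ = 0 := by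
        by_contra h3
        exact hfin.ne (BN_div_one u₁ u₂ h2 h3)
      have h4 : (u₂ - 1) * (u₂ + 1) = 0 := by nlinarith
      rcases mul_eq_zero.mp h4 with h | h
      · exact Or.inl ⟨h3, by linarith⟩
      · exact Or.inr ⟨h3, by linarith⟩
  · rintro (⟨ha, hb⟩ | ⟨h0, h1⟩ | ⟨h0, h1⟩)
    · exact BN_fin_lt u₁ u₂ (by nlinarith)
    · subst h0; subst h1; exact BN_fin_one 1 (by norm_num)
    · subst h0; subst h1; exact BN_fin_one (-1) (by norm_num)
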